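/- The monoid ⟨a, b | aab = bba⟩ embeds into a group, yet ∼p is not transitive on it. Hence there exists a group-embeddable semigroup on which ∼p fails to be transitive. -/

import Mathlib

/-- The defining relation `aab = bba` on the free monoid on two generators. -/
def aabRel : FreeMonoid (Fin 2) → FreeMonoid (Fin 2) → Prop := fun x y =>
  x = FreeMonoid.of 0 * FreeMonoid.of 0 * FreeMonoid.of 1 ∧
  y = FreeMonoid.of 1 * FreeMonoid.of 1 * FreeMonoid.of 0

/-- The monoid `⟨a, b | aab = bba⟩`. -/
abbrev AabMonoid := (conGen aabRel).Quotient

/-- `x ∼p y` iff `x = uv` and `y = vu` for some `u, v`. -/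
def pRel {S : Type*} [Mul S] (x y : S) : Prop := ∃ u v : S, x = u * v ∧ y = v * u

noncomputable section Aab

open FreeMonoid Real goldenRatio

/-- digit value of a letter -/
def gc : Fin 2 → ℝ := fun i => (i : ℝ)

@[simp] lemma gc0 : gc 0 = 0 := by norm_num [gc]
@[simp] lemma gc1 : gc 1 = 1 := by norm_num [gc]

lemma fin2 : ∀ x : Fin 2, x = 0 ∨ x = 1 := by decide

lemma gc_nonneg (l : Fin 2) : 0 ≤ gc l := by rcases fin2 l with rfl | rfl <;> simp

/-- the "value" of a word, reading letters as golden-ratio digits (first letter lowest). -/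
def V : List (Fin 2) → ℝ
  | [] => 0
  | l :: t => gc l + goldenRatio * V t

@[simp] lemma V_nil : V [] = 0 := rfl
@[simp] lemma V_cons (l : Fin 2) (t : List (Fin 2)) : V (l :: t) = gc l + φ * V t := rfl

lemma V_nonneg (w : List (Fin 2)) : 0 ≤ V w := by
  induction w with
  | nil => simp
  | cons l t ih => simp only [V_cons]; have := gc_nonneg l; nlinarith [goldenRatio_pos]

lemma V_append (p q : List (Fin 2)) : V (p ++ q) = V p + φ ^ p.length * V q := by
  induction p with
  | nil => simp
  | cons x t ih => simp only [List.cons_append, V_cons, ih, List.length_cons, pow_succ]; ring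

/-- multiplication by φ as a permutation of ℝ -/
def Ap : Equiv.Perm ℝ := Equiv.mulLeft₀ goldenRatio goldenRatio_ne_zero

/-- x ↦ φ x + 1 as a permutation of ℝ -/
def Bp : Equiv.Perm ℝ := Ap.trans (Equiv.addRight 1)

@[simp] lemma Ap_apply (x : ℝ) : Ap x = φ * x := rfl
@[simp] lemma Bp_apply (x : ℝ) : Bp x = φ * x + 1 := rfl

/-- lift to a monoid hom from the free monoid to permutations of ℝ -/
def Fm : FreeMonoid (Fin 2) →* Equiv.Perm ℝ :=
  FreeMonoid.lift (fun i => if i = 0 then Ap else Bp)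

lemma Fm_of_apply (l : Fin 2) (x : ℝ) : Fm (of l) (x) = φ * x + gc l := by
  fin_cases l <;> simp [Fm, lift_eval_of]

lemma Fm_apply (w : List (Fin 2)) (x : ℝ) :
    Fm (ofList w) x = φ ^ w.length * x + V w := by
  induction w with
  | nil => simp [ofList_nil]
  | cons l t ih =>
    rw [ofList_cons, map_mul]
    simp only [Equiv.Perm.mul_apply, ih, Fm_of_apply, V_cons, List.length_cons, pow_succ]
    ring

lemma Fm_rel : ∀ x y, aabRel x y → Fm x = Fm y := by
  rintro x y ⟨rfl, rfl⟩
  have h1 : (of 0 * of 0 * of 1 : FreeMonoid (Fin 2)) = ofList [0, 0, 1] := rfl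
  have h2 : (of 1 * of 1 * of 0 : FreeMonoid (Fin 2)) = ofList [1, 1, 0] := rfl
  rw [h1, h2]
  ext x
  rw [Fm_apply, Fm_apply]
  simp only [List.length_cons, List.length_nil, V_cons, V_nil, gc0, gc1]
  linear_combination goldenRatio_sq

lemma cgen_le_ker : conGen aabRel ≤ Con.ker Fm :=
  Con.conGen_le.mpr fun x y h => (Con.ker_rel Fm).mpr (Fm_rel x y h)

/-- the induced map on the quotient monoid -/
def fq : AabMonoid →* Equiv.Perm ℝ := Con.lift _ Fm cgen_le_ker

lemma eq_imp {p q : List (Fin 2)}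
    (h : ((ofList p : FreeMonoid (Fin 2)) : AabMonoid) = (ofList q : FreeMonoid (Fin 2))) :
    p.length = q.length ∧ V p = V q := by
  have h2 : Fm (ofList p) = Fm (ofList q) := cgen_le_ker (((conGen aabRel).eq).mp h)
  have e0 : Fm (ofList p) 0 = Fm (ofList q) 0 := by rw [h2]
  have e1 : Fm (ofList p) 1 = Fm (ofList q) 1 := by rw [h2]
  rw [Fm_apply, Fm_apply] at e0 e1
  simp only [mul_zero, zero_add, mul_one] at e0 e1
  have hpow : φ ^ p.length = φ ^ q.length := by linarith
  exact ⟨pow_right_injective₀ goldenRatio_pos (ne_of_gt one_lt_goldenRatio) hpow, e0⟩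

/-- one step of leftmost rewriting bba → aab -/
def step : List (Fin 2) → Option (List (Fin 2))
  | x :: y :: z :: t =>
      if x = 1 ∧ y = 1 ∧ z = 0 then some (0 :: 0 :: 1 :: t)
      else (step (y :: z :: t)).map (x :: ·)
  | _ => none

lemma step_count : ∀ w w', step w = some w' → w.count 1 = w'.count 1 + 1 := by
  intro w
  induction w with
  | nil => simp [step]
  | cons x t ih =>
    match t with
    | [] => simp [step]
    | [y] => simp [step]
    | y :: z :: s =>
      intro w' hw
      rw [step] at hw
      split at hw
      · rename_i hc
        obtain ⟨rfl, rfl, rfl⟩ := hc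
        simp only [Option.some.injEq] at hw
        subst hw
        simp [List.count_cons]
      · rcases Option.map_eq_some_iff.mp hw with ⟨t', ht', rfl⟩
        have := ih t' ht'
        simp only [List.count_cons] at *
        omega

lemma step_conGen : ∀ w w', step w = some w' →
    (conGen aabRel) (ofList w) (ofList w') := by
  intro w
  induction w with
  | nil => simp [step]
  | cons x t ih =>
    match t with
    | [] => simp [step]
    | [y] => simp [step]
    | y :: z :: s =>
      intro w' hw
      rw [step] at hw
      split at hw
      · rename_i hc
        obtain ⟨rfl, rfl, rfl⟩ := hc
        simp only [Option.some.injEq] at hw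
        subst hw
        have base : (conGen aabRel) (ofList [0, 0, 1]) (ofList [1, 1, 0]) :=
          ConGen.Rel.of _ _ ⟨rfl, rfl⟩
        have h1 : (ofList (1 :: 1 :: 0 :: s) : FreeMonoid (Fin 2)) =
            ofList [1, 1, 0] * ofList s := rfl
        have h2 : (ofList (0 :: 0 :: 1 :: s) : FreeMonoid (Fin 2)) =
            ofList [0, 0, 1] * ofList s := rfl
        rw [h1, h2]
        exact (conGen aabRel).mul ((conGen aabRel).symm base) ((conGen aabRel).refl _)
      · rcases Option.map_eq_some_iff.mp hw with ⟨t', ht', rfl⟩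
        have h1 : (ofList (x :: y :: z :: s) : FreeMonoid (Fin 2)) =
            of x * ofList (y :: z :: s) := rfl
        have h2 : (ofList (x :: t') : FreeMonoid (Fin 2)) = of x * ofList t' := rfl
        rw [h1, h2]
        exact (conGen aabRel).mul ((conGen aabRel).refl _) (ih t' ht')

lemma step_none : ∀ w, step w = none → ∀ p q, w ≠ p ++ 1 :: 1 :: 0 :: q := by
  intro w
  induction w with
  | nil => intro _ p q h; have := congrArg List.length h; simp at this
  | cons x t ih =>
    match t with
    | [] => intro _ p q h; have := congrArg List.length h; simp at this; omega
    | [y] => intro _ p q h; have := congrArg List.length h; simp at this; omega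
    | y :: z :: s =>
      intro hw p q h
      rw [step] at hw
      split at hw
      · exact absurd hw (by simp)
      · rename_i hc
        have ht : step (y :: z :: s) = none := by
          cases hstep : step (y :: z :: s) with
          | none => rfl
          | some t' => rw [hstep] at hw; simp at hw
        match p with
        | [] =>
          simp only [List.nil_append, List.cons.injEq] at h
          exact hc ⟨h.1, h.2.1, h.2.2.1⟩
        | a :: p' =>
          simp only [List.cons_append, List.cons.injEq] at h
          exact ih ht p' q h.2

/-- iterated rewriting with fuel -/
def normAux : ℕ → List (Fin 2) → List (Fin 2)
  | 0, w => w
  | n + 1, w =>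
    match step w with
    | none => w
    | some w' => normAux n w'

lemma normAux_spec : ∀ n w, w.count 1 ≤ n →
    (conGen aabRel) (ofList w) (ofList (normAux n w)) ∧ step (normAux n w) = none := by
  intro n
  induction n with
  | zero =>
    intro w hw
    have hs : step w = none := by
      cases hstep : step w with
      | none => rfl
      | some w' => have := step_count w w' hstep; omega
    exact ⟨(conGen aabRel).refl _, hs⟩
  | succ n ih =>
    intro w hw
    cases hstep : step w with
    | none =>
      constructor
      · show (conGen aabRel) (ofList w) (ofList (normAux (n+1) w))
        rw [normAux, hstep]
        exact (conGen aabRel).refl _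
      · show step (normAux (n+1) w) = none
        rw [normAux, hstep]
        exact hstep
    | some w' =>
      have hc := step_count w w' hstep
      have hw' : w'.count 1 ≤ n := by omega
      have h1 : normAux (n+1) w = normAux n w' := by rw [normAux, hstep]
      rw [h1]
      exact ⟨(conGen aabRel).trans (step_conGen w w' hstep) (ih w' hw').1, (ih w' hw').2⟩

/-- normal form -/
def nrm (w : List (Fin 2)) : List (Fin 2) := normAux (w.count 1) w

lemma nrm_conGen (w : List (Fin 2)) : (conGen aabRel) (ofList w) (ofList (nrm w)) :=
  (normAux_spec _ w le_rfl).1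

lemma nrm_nf (w : List (Fin 2)) : ∀ p q, nrm w ≠ p ++ 1 :: 1 :: 0 :: q :=
  step_none _ (normAux_spec _ w le_rfl).2

/-- no two adjacent `1`s -/
def NoTwo (w : List (Fin 2)) : Prop := ∀ p q, w ≠ p ++ 1 :: 1 :: q

/-- normal form: no factor `[1,1,0]` -/
def Nf (w : List (Fin 2)) : Prop := ∀ p q, w ≠ p ++ 1 :: 1 :: 0 :: q

lemma noTwo_tail {x : Fin 2} {t : List (Fin 2)} (h : NoTwo (x :: t)) : NoTwo t :=
  fun p q e => h (x :: p) q (by simp [e])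

lemma noTwo_prefix {w : List (Fin 2)} {l : Fin 2} (h : NoTwo (w ++ [l])) : NoTwo w :=
  fun p q e => h p (q ++ [l]) (by simp [e])

lemma nf_prefix {w : List (Fin 2)} {l : Fin 2} (h : Nf (w ++ [l])) : Nf w :=
  fun p q e => h p (q ++ [l]) (by simp [e])

lemma nf_last0_noTwo : ∀ (q p v : List (Fin 2)), Nf (v ++ [0]) → v ++ [0] ≠ p ++ 1 :: 1 :: q := by
  intro q
  induction q with
  | nil =>
    intro p v _ e
    have h1 : (v ++ [0]).getLast? = some 0 := List.getLast?_concat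
    have h2 : (p ++ [1, 1]).getLast? = some 1 := by
      have : p ++ [(1 : Fin 2), 1] = (p ++ [1]) ++ [1] := by simp
      rw [this]; exact List.getLast?_concat
    rw [e] at h1
    have : p ++ (1 : Fin 2) :: 1 :: [] = p ++ [1, 1] := rfl
    rw [this, h2] at h1
    simp at h1
  | cons c q' ih =>
    intro p v hnf e
    rcases fin2 c with rfl | rfl
    · exact hnf p q' e
    · have e' : v ++ [0] = (p ++ [1]) ++ 1 :: 1 :: q' := by simp [e]
      exact ih (p ++ [1]) v hnf e'

lemma noTwo_of_nf_last0 {v : List (Fin 2)} (h : Nf (v ++ [0])) : NoTwo (v ++ [0]) :=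
  fun p q => nf_last0_noTwo q p v h

lemma gold_mul_self : φ * φ = φ + 1 := by linear_combination goldenRatio_sq

lemma gold_cube : φ * (φ * φ) = 2 * φ + 1 := by linear_combination (φ + 1) * goldenRatio_sq

lemma V_bound : ∀ (n : ℕ) (w : List (Fin 2)), w.length ≤ n → NoTwo w →
    V w ≤ φ ^ w.length - φ + 1 := by
  intro n
  induction n with
  | zero =>
    intro w hw _
    have : w = [] := List.eq_nil_of_length_eq_zero (Nat.le_zero.mp hw)
    subst this
    simp only [V_nil, List.length_nil, pow_zero]
    linarith [goldenRatio_lt_two]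
  | succ n ih =>
    intro w hw hnt
    match w with
    | [] =>
      simp only [V_nil, List.length_nil, pow_zero]
      linarith [goldenRatio_lt_two]
    | x :: t =>
      rcases fin2 x with rfl | rfl
      · -- first letter 0
        have hlen : t.length ≤ n := by simp only [List.length_cons] at hw; omega
        have h1 := ih t hlen (noTwo_tail hnt)
        simp only [V_cons, gc0, zero_add, List.length_cons]
        have e : φ ^ (t.length + 1) = φ ^ t.length * φ := pow_succ _ _
        rw [e]
        nlinarith [mul_le_mul_of_nonneg_left h1 goldenRatio_pos.le, gold_mul_self, goldenRatio_lt_two,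
          goldenRatio_pos, one_lt_goldenRatio]
      · -- first letter 1
        match t with
        | [] =>
          simp only [V_cons, V_nil, gc1, mul_zero, add_zero, List.length_cons,
            List.length_nil, zero_add, pow_one]
          linarith
        | y :: s =>
          rcases fin2 y with rfl | rfl
          · have hlen : s.length ≤ n := by
              simp only [List.length_cons] at hw; omega
            have h1 := ih s hlen (noTwo_tail (noTwo_tail hnt))
            simp only [V_cons, gc0, gc1, zero_add, List.length_cons]
            have e : φ ^ (s.length + 1 + 1) = φ ^ s.length * (φ * φ) := by ring
            rw [e]
            nlinarith [mul_le_mul_of_nonneg_left h1 (mul_pos goldenRatio_pos goldenRatio_pos).le,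
              gold_mul_self, gold_cube, goldenRatio_lt_two, goldenRatio_pos, one_lt_goldenRatio, V_nonneg s]
          · exact absurd rfl (hnt [] s)

lemma V_concat (w : List (Fin 2)) (l : Fin 2) :
    V (w ++ [l]) = V w + gc l * φ ^ w.length := by
  rw [V_append]; simp [mul_comm]

lemma no_mix {u v : List (Fin 2)} (h : u.length = v.length) (hv : Nf (v ++ [0])) :
    V (u ++ [1]) ≠ V (v ++ [0]) := by
  have h1 : V (u ++ [1]) = V u + φ ^ u.length := by rw [V_concat]; simp
  have h2 : V (v ++ [0]) = V v := by rw [V_concat]; simp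
  have hb := V_bound v.length v le_rfl (noTwo_prefix (noTwo_of_nf_last0 hv))
  have hu := V_nonneg u
  rw [h1, h2, h]
  intro hEq
  linarith [one_lt_goldenRatio]

lemma nf_unique : ∀ (n : ℕ) (u v : List (Fin 2)), u.length ≤ n → u.length = v.length →
    Nf u → Nf v → V u = V v → u = v := by
  intro n
  induction n with
  | zero =>
    intro u v hn hl _ _ _
    have hu : u = [] := List.eq_nil_of_length_eq_zero (Nat.le_zero.mp hn)
    have hv : v = [] := List.eq_nil_of_length_eq_zero (by omega)
    rw [hu, hv]
  | succ n ih =>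
    intro u v hn hl hu hv hV
    rcases List.eq_nil_or_concat u with rfl | ⟨u', l, rfl⟩
    · have : v = [] := List.eq_nil_of_length_eq_zero (by simpa using hl.symm)
      rw [this]
    · rcases List.eq_nil_or_concat v with rfl | ⟨v', m, rfl⟩
      · exact absurd hl (by simp)
      · simp only [List.concat_eq_append] at hn hl hu hv hV ⊢
        have hlen : u'.length = v'.length := by
          simp only [List.length_append, List.length_cons, List.length_nil] at hl; omega
        have hn' : u'.length ≤ n := by
          simp only [List.length_append, List.length_cons, List.length_nil] at hn; omega
        have hVu := V_concat u' l
        have hVv := V_concat v' m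
        rcases fin2 l with rfl | rfl <;> rcases fin2 m with rfl | rfl
        · -- 0, 0
          have hV' : V u' = V v' := by
            rw [hVu, hVv] at hV; simp only [gc0, zero_mul, add_zero] at hV; exact hV
          rw [ih u' v' hn' hlen (nf_prefix hu) (nf_prefix hv) hV']
        · -- 0, 1
          exact absurd hV.symm (no_mix hlen.symm hu)
        · -- 1, 0
          exact absurd hV (no_mix hlen hv)
        · -- 1, 1
          have hV' : V u' = V v' := by
            rw [hVu, hVv, hlen] at hV
            simpa using hV
          rw [ih u' v' hn' hlen (nf_prefix hu) (nf_prefix hv) hV']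

/-- two words are identified in the quotient monoid iff they have the same length
and the same golden-ratio value -/
lemma coe_eq_iff (p q : List (Fin 2)) :
    ((ofList p : FreeMonoid (Fin 2)) : AabMonoid) = (ofList q : FreeMonoid (Fin 2)) ↔
      p.length = q.length ∧ V p = V q := by
  constructor
  · exact eq_imp
  · rintro ⟨hl, hV⟩
    have cp := nrm_conGen p
    have cq := nrm_conGen q
    have ep : ((ofList p : FreeMonoid (Fin 2)) : AabMonoid) = ofList (nrm p) := ((conGen aabRel).eq).mpr cp
    have eq' : ((ofList q : FreeMonoid (Fin 2)) : AabMonoid) = ofList (nrm q) := ((conGen aabRel).eq).mpr cq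
    have ip := eq_imp ep
    have iq := eq_imp eq'
    have : nrm p = nrm q := by
      apply nf_unique (nrm p).length _ _ le_rfl (by omega) (nrm_nf p) (nrm_nf q) (by linarith [ip.2, iq.2])
    rw [ep, eq', this]

lemma Fm_apply' (w : FreeMonoid (Fin 2)) (x : ℝ) :
    Fm w x = φ ^ (FreeMonoid.toList w).length * x + V (FreeMonoid.toList w) :=
  Fm_apply (toList w) x

lemma mk'_eq_coe (w : FreeMonoid (Fin 2)) :
    (conGen aabRel).mk' w = ((w : FreeMonoid (Fin 2)) : AabMonoid) := rfl

lemma fq_injective : Function.Injective fq := by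
  intro a b hab
  obtain ⟨p, rfl⟩ := Con.mk'_surjective a
  obtain ⟨q, rfl⟩ := Con.mk'_surjective b
  have hF : Fm p = Fm q := by
    have h1 : fq ((conGen aabRel).mk' p) = Fm p := Con.lift_mk' cgen_le_ker p
    have h2 : fq ((conGen aabRel).mk' q) = Fm q := Con.lift_mk' cgen_le_ker q
    rw [h1, h2] at hab
    exact hab
  have e0 : Fm p 0 = Fm q 0 := by rw [hF]
  have e1 : Fm p 1 = Fm q 1 := by rw [hF]
  rw [Fm_apply', Fm_apply'] at e0 e1
  simp only [mul_zero, zero_add, mul_one] at e0 e1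
  have hpow : φ ^ (toList p).length = φ ^ (toList q).length := by linarith
  have hlen := pow_right_injective₀ goldenRatio_pos (ne_of_gt one_lt_goldenRatio) hpow
  rw [mk'_eq_coe, mk'_eq_coe]
  have : p = ofList (toList p) := rfl
  rw [this, (rfl : q = ofList (toList q))]
  exact (coe_eq_iff _ _).mpr ⟨hlen, e0⟩

end Aab

/-- The monoid `⟨a, b | aab = bba⟩` embeds into a group, yet `∼p` is not transitive on
it: a group-embeddable semigroup on which `∼p` fails to be transitive. -/
theorem stmt_8 :
    (∃ (G : GrpCat) (f : AabMonoid →* G), Function.Injective f) ∧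
    ¬ Transitive (pRel (S := AabMonoid)) := by
  open FreeMonoid Real goldenRatio in
  constructor
  · refine ⟨GrpCat.of (ULift (Equiv.Perm ℝ)),
      (MulEquiv.ulift.symm.toMonoidHom.comp fq : AabMonoid →* ULift (Equiv.Perm ℝ)), ?_⟩
    intro a b hab
    exact fq_injective (MulEquiv.ulift.symm.injective hab)
  · intro htr
    set x : AabMonoid := ((ofList [1, 0, 0] : FreeMonoid (Fin 2)) : AabMonoid) with hxdef
    set y : AabMonoid := ((ofList [0, 0, 1] : FreeMonoid (Fin 2)) : AabMonoid) with hydef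
    set z : AabMonoid := ((ofList [0, 1, 1] : FreeMonoid (Fin 2)) : AabMonoid) with hzdef
    have hxy : pRel x y :=
      ⟨((ofList [1] : FreeMonoid (Fin 2)) : AabMonoid),
       ((ofList [0, 0] : FreeMonoid (Fin 2)) : AabMonoid), rfl, rfl⟩
    have hyz : pRel y z := by
      refine ⟨((ofList [1, 1] : FreeMonoid (Fin 2)) : AabMonoid),
        ((ofList [0] : FreeMonoid (Fin 2)) : AabMonoid), ?_, rfl⟩
      show y = ((ofList ([1, 1] ++ [0]) : FreeMonoid (Fin 2)) : AabMonoid)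
      rw [hydef, coe_eq_iff]
      constructor
      · rfl
      · simp only [V_cons, V_nil, gc0, gc1, List.cons_append, List.nil_append]
        linear_combination goldenRatio_sq
    have hxz := htr hxy hyz
    obtain ⟨u, v, hx, hz⟩ := hxz
    obtain ⟨p, rfl⟩ := Con.mk'_surjective u
    obtain ⟨q, rfl⟩ := Con.mk'_surjective v
    have hx' : ((ofList [1, 0, 0] : FreeMonoid (Fin 2)) : AabMonoid) =
        ((ofList (toList p ++ toList q) : FreeMonoid (Fin 2)) : AabMonoid) := hx
    have hz' : ((ofList [0, 1, 1] : FreeMonoid (Fin 2)) : AabMonoid) =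
        ((ofList (toList q ++ toList p) : FreeMonoid (Fin 2)) : AabMonoid) := hz
    rw [coe_eq_iff] at hx' hz'
    obtain ⟨hxl, hxV⟩ := hx'
    obtain ⟨hzl, hzV⟩ := hz'
    rw [V_append] at hxV hzV
    simp only [V_cons, V_nil, gc0, gc1, mul_zero, add_zero, mul_one, zero_add,
      List.length_cons, List.length_nil, List.length_append] at hxV hzV hxl
    have h3 : (toList p).length = 0 ∨ (toList p).length = 1 ∨ (toList p).length = 2 ∨
        (toList p).length = 3 := by omega
    rcases h3 with h | h | h | h
    · have hp0 : toList p = [] := List.eq_nil_of_length_eq_zero h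
      rw [hp0] at hxV hzV
      simp only [V_nil, List.length_nil, pow_zero, one_mul, zero_add, mul_zero,
        add_zero] at hxV hzV
      nlinarith [gold_mul_self, one_lt_goldenRatio]
    · obtain ⟨a, hpa⟩ := List.length_eq_one_iff.mp h
      have hq2 : (toList q).length = 2 := by omega
      obtain ⟨b, c, hqbc⟩ := List.length_eq_two.mp hq2
      rw [hpa, hqbc] at hxV hzV
      simp only [V_cons, V_nil, List.length_cons, List.length_nil, mul_zero, add_zero,
        zero_add, pow_one, pow_succ, pow_zero, one_mul] at hxV hzV
      rcases fin2 a with rfl | rfl <;> rcases fin2 b with rfl | rfl <;>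
        rcases fin2 c with rfl | rfl <;>
        simp only [gc0, gc1] at hxV hzV <;>
        nlinarith [gold_mul_self, one_lt_goldenRatio, goldenRatio_pos]
    · obtain ⟨a, b, hpab⟩ := List.length_eq_two.mp h
      have hq1 : (toList q).length = 1 := by omega
      obtain ⟨c, hqc⟩ := List.length_eq_one_iff.mp hq1
      rw [hpab, hqc] at hxV hzV
      simp only [V_cons, V_nil, List.length_cons, List.length_nil, mul_zero, add_zero,
        zero_add, pow_one, pow_succ, pow_zero, one_mul] at hxV hzV
      rcases fin2 a with rfl | rfl <;> rcases fin2 b with rfl | rfl <;>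
        rcases fin2 c with rfl | rfl <;>
        simp only [gc0, gc1] at hxV hzV <;>
        nlinarith [gold_mul_self, one_lt_goldenRatio, goldenRatio_pos]
    · have hq0 : (toList q).length = 0 := by omega
      have hq0' : toList q = [] := List.eq_nil_of_length_eq_zero hq0
      rw [hq0'] at hxV hzV
      simp only [V_nil, List.length_nil, pow_zero, one_mul, zero_add, mul_zero,
        add_zero] at hxV hzV
      nlinarith [gold_mul_self, one_lt_goldenRatio]
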